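/- (Theorem 4(ii), scenario H₃.) Suppose N ≥ 2. Under the perturbation conditions (D₁, E₁, H₃), for every i ∈ {1, …, N−1} the conditional quasi-stationary probability satisfies π̂_i(ε) = ĉ_i[0] + ĉ_i[1] ε + ô_i(ε) for ε ∈ (0, ε₀], where ô_i(ε)/ε → 0 as ε → 0+, ĉ_i[0] = c_i[1]/d[1] > 0 and ĉ_i[1] = ( c_i[2] d[1] − c_i[1] d[2] ) / d[1]², where d[l] = Σ_{j=1}^{N−1} c_j[l] for l = 1, 2 and, for j ∈ {1, …, N−1}, c_j[1] > 0 and c_j[2] are the coefficients in the asymptotic expansion π_j(ε) = c_j[1] ε + c_j[2] ε² + o(ε²) of the stationary probability. -/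

import Mathlib

open Filter Finset Topology

noncomputable section

/-- Two-term Laurent asymptotic expansion:
`f ε = c0 * ε^h + c1 * ε^(h+1) + o(ε^(h+1))` as `ε → 0+`. -/
def laurent2 (f : ℝ → ℝ) (h : ℤ) (c0 c1 : ℝ) : Prop :=
  Filter.Tendsto (fun ε : ℝ => (f ε - c0 * ε ^ h - c1 * ε ^ (h + 1)) / ε ^ (h + 1))
    (nhdsWithin 0 (Set.Ioi 0)) (nhds 0)

/-- `Γ_{i,j,σ}(ε) = p_{i,σ}(ε) p_{i+1,σ}(ε) ⋯ p_{j,σ}(ε)`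
(the sign σ is encoded by a `Bool`: `false` = −, `true` = +). -/
def Gam (p : ℕ → Bool → ℝ → ℝ) (σ : Bool) (i j : ℕ) (ε : ℝ) : ℝ :=
  ∏ m ∈ Finset.Icc i j, p m σ ε

/-- `e_i(ε) = e_{i,−}(ε) + e_{i,+}(ε)`. -/
def eT (e : ℕ → Bool → ℝ → ℝ) (i : ℕ) (ε : ℝ) : ℝ := e i false ε + e i true ε

/-- The expected return time
`E_{ii}(ε) = e_i(ε) + ∑_{k<i} e_k(ε) Γ_{k+1,i,−}(ε)/Γ_{k,i−1,+}(ε)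
            + ∑_{i<k≤N} e_k(ε) Γ_{i,k−1,+}(ε)/Γ_{i+1,k,−}(ε)`. -/
def ret (p e : ℕ → Bool → ℝ → ℝ) (N i : ℕ) (ε : ℝ) : ℝ :=
  eT e i ε
    + ∑ k ∈ Finset.range i, eT e k ε * (Gam p false (k + 1) i ε / Gam p true k (i - 1) ε)
    + ∑ k ∈ Finset.Icc (i + 1) N, eT e k ε * (Gam p true i (k - 1) ε / Gam p false (i + 1) k ε)

/-- The stationary probability `π_i(ε) = e_i(ε) / E_{ii}(ε)`. -/
def statPi (p e : ℕ → Bool → ℝ → ℝ) (N i : ℕ) (ε : ℝ) : ℝ := eT e i ε / ret p e N i ε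

/-- `b_i[l] = b_{i,−}[l] + b_{i,+}[l]`. -/
def bT (b : ℕ → Bool → ℕ → ℝ) (i l : ℕ) : ℝ := b i false l + b i true l

/-- The conditional quasi-stationary probability `π̂_i(ε) = π_i(ε) / ∑_{j=1}^{N−1} π_j(ε)`. -/
def qPihat (p e : ℕ → Bool → ℝ → ℝ) (N i : ℕ) (ε : ℝ) : ℝ :=
  statPi p e N i ε / ∑ j ∈ Finset.Icc 1 (N - 1), statPi p e N j ε

/-- Theorem 4(ii), scenario H₃ (for `N ≥ 2`): under conditions (D₁, E₁, H₃), if for each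
`j ∈ {1,…,N−1}` the numbers `c j 1 > 0` and `c j 2` are the coefficients in the asymptotic
expansion `π_j(ε) = c_j[1] ε + c_j[2] ε² + o(ε²)`, then, with `d[l] = ∑_{j=1}^{N−1} c_j[l]`,
the conditional quasi-stationary probabilities satisfy
`π̂_i(ε) = ĉ_i[0] + ĉ_i[1] ε + o(ε)` with `ĉ_i[0] = c_i[1]/d[1] > 0` and
`ĉ_i[1] = (c_i[2] d[1] − c_i[1] d[2]) / d[1]²`. -/
theorem theorem4_ii_H3
    (N : ℕ) (hN : 1 ≤ N) (ε₀ : ℝ) (hε₀ : 0 < ε₀) (hε₁ : ε₀ ≤ 1)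
    (p e : ℕ → Bool → ℝ → ℝ)
    (hpos : ∀ i ≤ N, ∀ σ : Bool, ∀ ε ∈ Set.Ioc (0 : ℝ) ε₀, 0 < p i σ ε ∧ 0 < e i σ ε)
    (hone : ∀ i ≤ N, ∀ ε ∈ Set.Ioc (0 : ℝ) ε₀, p i false ε + p i true ε = 1)
    (a b : ℕ → Bool → ℕ → ℝ)
    (hD : ∀ i ≤ N, ∀ σ : Bool, ¬(i = 0 ∧ σ = true) → ¬(i = N ∧ σ = false) →
      0 < a i σ 0 ∧ laurent2 (p i σ) 0 (a i σ 0) (a i σ 1))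
    (hD0 : 0 < a 0 true 1 ∧ laurent2 (p 0 true) 1 (a 0 true 1) (a 0 true 2))
    (hDN : 0 < a N false 1 ∧ laurent2 (p N false) 1 (a N false 1) (a N false 2))
    (hE : ∀ i ≤ N, ∀ σ : Bool, ¬(i = 0 ∧ σ = true) → ¬(i = N ∧ σ = false) →
      0 < b i σ 0 ∧ laurent2 (e i σ) 0 (b i σ 0) (b i σ 1))
    (hE0 : 0 < b 0 true 1 ∧ laurent2 (e 0 true) 1 (b 0 true 1) (b 0 true 2))
    (hEN : 0 < b N false 1 ∧ laurent2 (e N false) 1 (b N false 1) (b N false 2))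
    (hNtwo : 2 ≤ N)
    (c : ℕ → ℕ → ℝ)
    (hc : ∀ j, 1 ≤ j → j ≤ N - 1 → 0 < c j 1 ∧ laurent2 (statPi p e N j) 1 (c j 1) (c j 2)) :
    ∀ i, 1 ≤ i → i ≤ N - 1 →
      laurent2 (qPihat p e N i) 0
          (c i 1 / ∑ j ∈ Finset.Icc 1 (N - 1), c j 1)
          ((c i 2 * (∑ j ∈ Finset.Icc 1 (N - 1), c j 1)
              - c i 1 * ∑ j ∈ Finset.Icc 1 (N - 1), c j 2)
            / (∑ j ∈ Finset.Icc 1 (N - 1), c j 1) ^ 2) ∧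
        0 < c i 1 / ∑ j ∈ Finset.Icc 1 (N - 1), c j 1 := by

  intro i hi1 hi2
  have hmem : i ∈ Finset.Icc 1 (N-1) := Finset.mem_Icc.mpr ⟨hi1, hi2⟩
  have hd1pos : 0 < ∑ j ∈ Finset.Icc 1 (N-1), c j 1 :=
    Finset.sum_pos (fun j hj => (hc j (Finset.mem_Icc.mp hj).1 (Finset.mem_Icc.mp hj).2).1)
      ⟨i, hmem⟩
  set d1 : ℝ := ∑ j ∈ Finset.Icc 1 (N-1), c j 1 with hd1def
  set d2 : ℝ := ∑ j ∈ Finset.Icc 1 (N-1), c j 2 with hd2def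
  have hd1ne : d1 ≠ 0 := ne_of_gt hd1pos
  refine ⟨?_, div_pos (hc i hi1 hi2).1 hd1pos⟩
  set l := nhdsWithin (0:ℝ) (Set.Ioi 0) with hl
  set u : ℕ → ℝ → ℝ := fun j ε => (statPi p e N j ε - c j 1 * ε - c j 2 * ε^2)/ε^2 with hudef
  have hu0 : ∀ j ∈ Finset.Icc 1 (N-1), Tendsto (u j) l (nhds 0) := by
    intro j hj
    obtain ⟨h1, h2⟩ := Finset.mem_Icc.mp hj
    have h := (hc j h1 h2).2
    unfold laurent2 at h
    have : (fun ε : ℝ => (statPi p e N j ε - c j 1 * ε ^ (1:ℤ) - c j 2 * ε ^ ((1:ℤ)+1)) / ε ^ ((1:ℤ)+1))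
        = u j := by
      funext ε
      norm_num [hudef]
    rwa [this] at h
  set v : ℝ → ℝ := fun ε => ∑ j ∈ Finset.Icc 1 (N-1), u j ε with hvdef
  have hv0 : Tendsto v l (nhds 0) := by
    have := tendsto_finset_sum (Finset.Icc 1 (N-1)) hu0
    simpa using this
  have hid : Tendsto (fun ε : ℝ => ε) l (nhds 0) :=
    tendsto_id.mono_left nhdsWithin_le_nhds
  -- the perturbation term in the denominator tends to 0
  have hw : Tendsto (fun ε => d2 * ε + ε * v ε) l (nhds 0) := by
    have := (((tendsto_const_nhds (x := d2)).mul hid).add (hid.mul hv0))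
    simpa using this
  have hsmall : ∀ᶠ ε in l, |d2 * ε + ε * v ε| < d1/2 := by
    have : Set.Ioo (-(d1/2)) (d1/2) ∈ nhds (0:ℝ) :=
      Ioo_mem_nhds (by linarith) (by linarith)
    filter_upwards [hw this] with ε hε
    exact abs_lt.mpr ⟨hε.1, hε.2⟩
  have hpos' : ∀ᶠ ε in l, (0:ℝ) < ε := eventually_mem_nhdsWithin
  -- limit of the nice closed form
  have hnice : Tendsto (fun ε =>
      (u i ε - (c i 1 / d1) * v ε
        - ((c i 2 * d1 - c i 1 * d2) / d1 ^ 2) * ε * (d2 + v ε))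
      / (d1 + (d2 * ε + ε * v ε))) l (nhds 0) := by
    have hnum : Tendsto (fun ε =>
        u i ε - (c i 1 / d1) * v ε
          - ((c i 2 * d1 - c i 1 * d2) / d1 ^ 2) * ε * (d2 + v ε)) l (nhds 0) := by
      have := ((hu0 i hmem).sub ((tendsto_const_nhds (x := c i 1 / d1)).mul hv0)).sub
        (((tendsto_const_nhds (x := (c i 2 * d1 - c i 1 * d2) / d1 ^ 2)).mul hid).mul
          ((tendsto_const_nhds (x := d2)).add hv0))
      simpa using this
    have hden : Tendsto (fun ε => d1 + (d2 * ε + ε * v ε)) l (nhds d1) := by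
      simpa using ((tendsto_const_nhds (x := d1)).add hw)
    have := hnum.div hden hd1ne
    rw [zero_div] at this
    exact this
  unfold laurent2
  refine Tendsto.congr' ?_ hnice
  filter_upwards [hsmall, hpos'] with ε hsm hε
  have hεne : ε ≠ 0 := ne_of_gt hε
  set D : ℝ := d1 + (d2 * ε + ε * v ε) with hDdef
  have hDpos : 0 < D := by
    have := neg_lt_of_abs_lt hsm
    simp only [hDdef]; linarith
  have hDne : D ≠ 0 := ne_of_gt hDpos
  -- expansions at ε
  have hexp : ∀ j ∈ Finset.Icc 1 (N-1),
      statPi p e N j ε = c j 1 * ε + c j 2 * ε^2 + u j ε * ε^2 := by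
    intro j hj
    have : u j ε * ε^2 = statPi p e N j ε - c j 1 * ε - c j 2 * ε^2 := by
      rw [hudef]
      field_simp
    linarith [this]
  have hg : (∑ j ∈ Finset.Icc 1 (N-1), statPi p e N j ε) = ε * D := by
    rw [Finset.sum_congr rfl hexp]
    simp only [Finset.sum_add_distrib, ← Finset.sum_mul, hDdef, hvdef, ← hd1def, ← hd2def]
    ring
  have hf : statPi p e N i ε = c i 1 * ε + c i 2 * ε^2 + u i ε * ε^2 := hexp i hmem
  symm
  rw [qPihat, hg, hf, hDdef]
  simp only [zpow_zero, zpow_one, zero_add, pow_one]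
  have hDne2 : d1 + (d2 * ε + ε * v ε) ≠ 0 := hDne
  generalize hX : d1 + (d2 * ε + ε * v ε) = X at hDne2 ⊢
  field_simp
  linear_combination (c i 1*d1 + c i 2*d1*ε - c i 1*d2*ε) * hX
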